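/- Let m, n be coprime integers with mn even. Then there exists a finite sequence of even integers q₀, q₁, ..., q_r with qᵢ ≠ 0 for i > 0, such that m/n = q₀ + 1/(q₁ + 1/(... + 1/q_r)) as a continued fraction, and r ≡ m (mod 2). -/

import Mathlib

def cfVal : List ℤ → ℚ
  | [] => 0
  | [a] => (a : ℚ)
  | a :: b :: l => (a : ℚ) + (cfVal (b :: l))⁻¹

lemma cfVal_cons (a : ℤ) (L : List ℤ) (h : L ≠ []) :
    cfVal (a :: L) = (a : ℚ) + (cfVal L)⁻¹ := by
  match L with
  | [] => exact absurd rfl h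
  | b :: l => rfl

lemma aux : ∀ N : ℕ, ∀ m n : ℤ, n.natAbs ≤ N → n ≠ 0 → IsCoprime m n → Even (m * n) →
    ∃ q : List ℤ, q ≠ [] ∧ (∀ x ∈ q, Even x) ∧
      (∀ i : ℕ, 0 < i → ∀ h : i < q.length, q.get ⟨i, h⟩ ≠ 0) ∧
      cfVal q = (m : ℚ) / (n : ℚ) ∧
      ((q.length : ℤ) - 1) % 2 = m % 2 ∧
      (n.natAbs < m.natAbs → ∀ h0 : 0 < q.length, q.get ⟨0, h0⟩ ≠ 0) := by
  intro N
  induction N with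
  | zero => intro m n hN hn _ _; exact absurd (Int.natAbs_eq_zero.mp (Nat.le_zero.mp hN)) hn
  | succ N ih =>
    intro m n hN hn hcop he
    have habs : |n| = (n.natAbs : ℤ) := Int.abs_eq_natAbs n
    set b : ℤ := 2 * |n| with hbdef
    have hb : 0 < b := by have := abs_pos.mpr hn; omega
    set t : ℤ := m % b with htdef
    have ht0 : 0 ≤ t := Int.emod_nonneg m (by omega)
    have ht1 : t < b := Int.emod_lt_of_pos m hb
    set s : ℤ := if t < |n| then t else t - b with hsdef
    have hdvdbt : b ∣ (m - t) := by
      have : m % b = m - b * (m / b) := Int.emod_def m b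
      exact ⟨m / b, by omega⟩
    have hdvd : (2 * n) ∣ (m - s) := by
      have h1 : (2 * n) ∣ b := by
        rcases abs_choice n with h | h <;> rw [hbdef, h] <;>
          first
          | exact dvd_refl _
          | exact ⟨-1, by ring⟩
      have h2 : (2 * n) ∣ (m - t) := h1.trans hdvdbt
      rw [hsdef]
      split
      · exact h2
      · have : m - (t - b) = (m - t) + b := by ring
        rw [this]; exact dvd_add h2 h1
    obtain ⟨k, hk⟩ := hdvd
    have hm : m = 2 * k * n + s := by linarith [hk]
    -- parity facts
    have hnot2 : ¬ (Even m ∧ Even n) := by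
      rintro ⟨⟨a, ha⟩, ⟨c, hc⟩⟩
      have h2m : (2 : ℤ) ∣ m := ⟨a, by omega⟩
      have h2n : (2 : ℤ) ∣ n := ⟨c, by omega⟩
      have := hcop.isUnit_of_dvd' h2m h2n
      rw [Int.isUnit_iff] at this
      omega
    have hor : Even m ∨ Even n := Int.even_mul.mp he
    have hms : Even (m - s) := ⟨n * k, by linarith⟩
    have hparms : (Even m ↔ Even s) := Int.even_sub.mp hms
    by_cases hs : s = 0
    · -- n is a unit
      have hndvd : n ∣ m := ⟨2 * k, by rw [hm, hs]; ring⟩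
      have hu : IsUnit n := hcop.isUnit_of_dvd' hndvd dvd_rfl
      rw [Int.isUnit_iff] at hu
      have hme : Even m := by
        rcases hor with h | h
        · exact h
        · exfalso; rcases h with ⟨c, hc⟩; omega
      refine ⟨[m * n], by simp, ?_, ?_, ?_, ?_, ?_⟩
      · intro x hx
        simp only [List.mem_singleton] at hx
        subst hx
        exact hme.mul_right n
      · intro i hi h; simp at h; omega
      · rcases hu with h | h <;> subst h <;> simp [cfVal] <;> push_cast <;> ring
      · simp only [List.length_singleton]
        have := Int.even_iff.mp hme
        omega
      · intro hlt h0
        have hm0 : m ≠ 0 := by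
          intro h; rw [h] at hlt; simp at hlt
        simpa using mul_ne_zero hm0 hn
    · -- recursive case
      have hsb : -|n| ≤ s ∧ s < |n| := by rw [hsdef]; split <;> omega
      have hslt : s.natAbs < n.natAbs := by
        rcases eq_or_lt_of_le hsb.1 with heq | hlt
        · exfalso
          have hndvds : n ∣ s := by
            have : n ∣ |n| := (dvd_abs n n).mpr dvd_rfl
            rw [← heq]; exact this.neg_right
          have hndvd : n ∣ m := by
            rw [hm]; exact dvd_add ⟨2 * k, by ring⟩ hndvds
          have hu := hcop.isUnit_of_dvd' hndvd dvd_rfl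
          rw [Int.isUnit_iff] at hu
          have hn1 : |n| = 1 := by rcases hu with h | h <;> simp [h]
          have hs1 : s = -1 := by omega
          have hmo : ¬ Even m := by
            rw [hparms]; rintro ⟨c, hc⟩; omega
          have hno : ¬ Even n := by rintro ⟨c, hc⟩; omega
          tauto
        · omega
      have hcopns : IsCoprime n s := by
        have h1 : IsCoprime (m + n * (-(2 * k))) n := hcop.add_mul_left_left (-(2 * k))
        have h2 : m + n * (-(2 * k)) = s := by linarith
        rw [h2] at h1
        exact h1.symm
      have hens : Even (n * s) := by
        rcases hor with h | h
        · exact Int.even_mul.mpr (Or.inr (hparms.mp h))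
        · exact Int.even_mul.mpr (Or.inl h)
      obtain ⟨L, hLne, hLeven, hLtail, hLval, hLpar, hLhead⟩ :=
        ih n s (by omega) hs hcopns hens
      refine ⟨2 * k :: L, by simp, ?_, ?_, ?_, ?_, ?_⟩
      · intro x hx
        rcases List.mem_cons.mp hx with h | h
        · subst h; exact ⟨k, by ring⟩
        · exact hLeven x h
      · intro i hi h
        obtain ⟨j, rfl⟩ : ∃ j, i = j + 1 := ⟨i - 1, by omega⟩
        simp only [List.length_cons, Nat.add_lt_add_iff_right] at h
        rw [List.get_cons_succ]
        rcases Nat.eq_zero_or_pos j with hj | hj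
        · subst hj
          exact hLhead hslt (by omega)
        · exact hLtail j hj h
      · rw [cfVal_cons _ _ hLne, hLval]
        have hsQ : (s : ℚ) ≠ 0 := Int.cast_ne_zero.mpr hs
        have hnQ : (n : ℚ) ≠ 0 := Int.cast_ne_zero.mpr hn
        rw [inv_div]
        have hmQ : (m : ℚ) = 2 * k * n + s := by exact_mod_cast congrArg (Int.cast : ℤ → ℚ) hm
        rw [hmQ]
        field_simp
        push_cast; ring
      · simp only [List.length_cons]
        have hparity : (m % 2 = 0 ∧ n % 2 = 1) ∨ (m % 2 = 1 ∧ n % 2 = 0) := by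
          rcases hor with h | h
          · have h1 := Int.even_iff.mp h
            have h2 : ¬ Even n := fun hh => hnot2 ⟨h, hh⟩
            rw [Int.not_even_iff] at h2
            exact Or.inl ⟨h1, h2⟩
          · have h1 := Int.even_iff.mp h
            by_cases h2 : Even m
            · exact absurd ⟨h2, h⟩ hnot2
            · rw [Int.not_even_iff] at h2
              exact Or.inr ⟨h2, h1⟩
        push_cast
        omega
      · intro hlt h0
        have hk0 : k ≠ 0 := by
          intro h
          subst h
          simp at hm
          rw [hm] at hlt
          omega
        simp only [List.get]
        omega

theorem stmt10 (m n : ℤ) (hn : n ≠ 0) (hcop : IsCoprime m n) (he : Even (m * n)) :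
    ∃ q : List ℤ, q ≠ [] ∧ (∀ x ∈ q, Even x) ∧
      (∀ i : ℕ, 0 < i → ∀ h : i < q.length, q.get ⟨i, h⟩ ≠ 0) ∧
      cfVal q = (m : ℚ) / (n : ℚ) ∧
      ((q.length : ℤ) - 1) % 2 = m % 2 := by
  obtain ⟨q, h1, h2, h3, h4, h5, _⟩ := aux n.natAbs m n le_rfl hn hcop he
  exact ⟨q, h1, h2, h3, h4, h5⟩
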